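/- Fix n ≥ 2 and complex numbers q_{ij} (1 ≤ i, j ≤ n) with q_{ii} = 1, q_{ji} = q_{ij}^{-1} and |q_{ij}| = 1. On ℓ²({1, …, n}^m) define P_m = (1/m!) Σ_{σ ∈ S_m} U^{m,q}_σ, where U^{m,q}_σ e_x = q^σ(x) e_{x ∘ σ^{-1}}. Then P_m is an orthogonal projection (P_m^* = P_m and P_m² = P_m), and its range equals the fixed space { u ∈ ℓ²({1, …, n}^m) : U^{m,q}_σ u = u for all σ ∈ S_m }. -/

import Mathlib

open scoped BigOperators

/-- `q^σ(x) = ∏ q_{x_{σ⁻¹(k)} x_{σ⁻¹(i)}}`, the product over all pairs `i < k`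
with `σ⁻¹(i) > σ⁻¹(k)`. -/
noncomputable def qSigma {n : ℕ} (q : Fin n → Fin n → ℂ) {m : ℕ} (x : Fin m → Fin n)
    (σ : Equiv.Perm (Fin m)) : ℂ :=
  ∏ p ∈ Finset.univ.filter (fun p : Fin m × Fin m => p.1 < p.2 ∧ σ⁻¹ p.2 < σ⁻¹ p.1),
    q (x (σ⁻¹ p.2)) (x (σ⁻¹ p.1))

lemma qSigma_eq {n : ℕ} (q : Fin n → Fin n → ℂ) {m : ℕ} (x : Fin m → Fin n)
    (σ : Equiv.Perm (Fin m)) :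
    qSigma q x σ = ∏ p : Fin m × Fin m,
      if p.1 < p.2 ∧ σ p.2 < σ p.1 then q (x p.1) (x p.2) else 1 := by
  rw [qSigma, Finset.prod_filter]
  refine Fintype.prod_equiv ((Equiv.prodComm _ _).trans (Equiv.prodCongr σ⁻¹ σ⁻¹))
    (fun p => if p.1 < p.2 ∧ σ⁻¹ p.2 < σ⁻¹ p.1 then q (x (σ⁻¹ p.2)) (x (σ⁻¹ p.1)) else 1)
    _ fun p => ?_
  simp [and_comm]

lemma norm_qSigma {n : ℕ} (q : Fin n → Fin n → ℂ) (hq3 : ∀ i j, ‖q i j‖ = 1)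
    {m : ℕ} (x : Fin m → Fin n) (σ : Equiv.Perm (Fin m)) : ‖qSigma q x σ‖ = 1 := by
  rw [qSigma, norm_prod]
  exact Finset.prod_eq_one fun p _ => hq3 _ _

lemma qSigma_mul {n : ℕ} (q : Fin n → Fin n → ℂ)
    (hq2 : ∀ i j, q j i = (q i j)⁻¹) (hq3 : ∀ i j, ‖q i j‖ = 1)
    {m : ℕ} (x : Fin m → Fin n) (σ τ : Equiv.Perm (Fin m)) :
    qSigma q x (σ * τ) = qSigma q (fun i => x (τ⁻¹ i)) σ * qSigma q x τ := by
  have hqne : ∀ i j, q i j ≠ 0 := by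
    intro i j h
    have := hq3 i j; rw [h] at this; simp at this
  rw [qSigma_eq, qSigma_eq, qSigma_eq]
  set A : Fin m × Fin m → ℂ := fun p =>
    if p.1 < p.2 ∧ (σ * τ) p.2 < (σ * τ) p.1 then q (x p.1) (x p.2) else 1 with hA
  set C : Fin m × Fin m → ℂ := fun p =>
    if p.1 < p.2 ∧ τ p.2 < τ p.1 then q (x p.1) (x p.2) else 1 with hC
  set B : Fin m × Fin m → ℂ := fun p =>
    if τ p.1 < τ p.2 ∧ σ (τ p.2) < σ (τ p.1) then q (x p.1) (x p.2) else 1 with hB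
  have hreidx : (∏ p : Fin m × Fin m,
      if p.1 < p.2 ∧ σ p.2 < σ p.1 then q (x (τ⁻¹ p.1)) (x (τ⁻¹ p.2)) else 1)
      = ∏ p : Fin m × Fin m, B p := by
    refine Fintype.prod_equiv (Equiv.prodCongr τ⁻¹ τ⁻¹)
      (fun p => if p.1 < p.2 ∧ σ p.2 < σ p.1 then q (x (τ⁻¹ p.1)) (x (τ⁻¹ p.2)) else 1)
      B fun p => ?_
    simp [hB]
  rw [hreidx]
  have hA0 : ∀ p, A p ≠ 0 := by
    intro p; rw [hA]; dsimp only
    split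
    · exact hqne _ _
    · exact one_ne_zero
  have key : ∀ p : Fin m × Fin m, A p * A p.swap = (B p * B p.swap) * (C p * C p.swap) := by
    rintro ⟨c, d⟩
    simp only [hA, hB, hC, Prod.swap, Equiv.Perm.mul_apply]
    rcases lt_trichotomy c d with h | h | h
    · have hdc : ¬ d < c := asymm h
      have hτ : τ c ≠ τ d := fun he => h.ne (τ.injective he)
      have hστ : σ (τ c) ≠ σ (τ d) := fun he => hτ (σ.injective he)
      rcases hτ.lt_or_gt with h1 | h1 <;> rcases hστ.lt_or_gt with h2 | h2 <;>
        simp only [h, hdc, h1, h2, asymm h1, asymm h2, and_true, true_and, and_false,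
          false_and, if_true, if_false, if_neg (fun hh : d < c ∧ _ => hdc hh.1),
          mul_one, one_mul] <;>
        simp [hq2 (x c) (x d), inv_mul_cancel₀ (hqne (x c) (x d))]
    · simp [h]
    · have hdc : ¬ c < d := asymm h
      have hτ : τ d ≠ τ c := fun he => h.ne (τ.injective he)
      have hστ : σ (τ d) ≠ σ (τ c) := fun he => hτ (σ.injective he)
      rcases hτ.lt_or_gt with h1 | h1 <;> rcases hστ.lt_or_gt with h2 | h2 <;>
        simp only [h, hdc, h1, h2, asymm h1, asymm h2, and_true, true_and, and_false,
          false_and, if_true, if_false, if_neg (fun hh : c < d ∧ _ => hdc hh.1),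
          mul_one, one_mul] <;>
        simp [hq2 (x d) (x c), inv_mul_cancel₀ (hqne (x d) (x c))]
  have hprod1 : (∏ p : Fin m × Fin m, (B p * C p) / A p) = 1 := by
    refine Finset.prod_involution (fun p _ => p.swap) ?_ ?_ (fun p _ => Finset.mem_univ _)
      (fun p _ => Prod.swap_swap p)
    · intro p _
      rw [div_mul_div_comm, div_eq_one_iff_eq (mul_ne_zero (hA0 p) (hA0 p.swap))]
      rw [key p]; ring
    · intro p _ hne heq
      apply hne
      have h1 : p.1 = p.2 := by
        have := congrArg Prod.fst heq; simpa using this.symm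
      simp [hB, hC, hA, h1, div_self (hA0 p)]
  have : (∏ p : Fin m × Fin m, B p * C p) / (∏ p : Fin m × Fin m, A p) = 1 := by
    rw [← Finset.prod_div_distrib]; exact hprod1
  rw [div_eq_one_iff_eq (Finset.prod_ne_zero_iff.2 fun p _ => hA0 p)] at this
  rw [← this, Finset.prod_mul_distrib]

/-- The operator `U^{m,q}_σ` on `ℓ²({1,…,n}^m)` with `U^{m,q}_σ e_x = q^σ(x) e_{x ∘ σ⁻¹}`. -/
noncomputable def Uop {n : ℕ} (q : Fin n → Fin n → ℂ) (m : ℕ) (σ : Equiv.Perm (Fin m)) :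
    EuclideanSpace ℂ (Fin m → Fin n) →L[ℂ] EuclideanSpace ℂ (Fin m → Fin n) :=
  LinearMap.toContinuousLinearMap
    { toFun := fun f => (WithLp.toLp 2 (fun y => qSigma q (fun i => y (σ i)) σ * f (fun i => y (σ i))) :
        EuclideanSpace ℂ (Fin m → Fin n))
      map_add' := by
        intro f g
        ext y
        simp [PiLp.add_apply, mul_add]
      map_smul' := by
        intro c f
        ext y
        simp [PiLp.smul_apply, smul_eq_mul]
        try ring }

lemma Uop_apply {n : ℕ} (q : Fin n → Fin n → ℂ) {m : ℕ} (σ : Equiv.Perm (Fin m))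
    (f : EuclideanSpace ℂ (Fin m → Fin n)) (y : Fin m → Fin n) :
    Uop q m σ f y = qSigma q (fun i => y (σ i)) σ * f (fun i => y (σ i)) := rfl

lemma Uop_one {n : ℕ} (q : Fin n → Fin n → ℂ) (m : ℕ) : Uop q m 1 = 1 := by
  ext f y
  rw [Uop_apply]
  have h1 : qSigma q (fun i => y ((1 : Equiv.Perm (Fin m)) i)) 1 = 1 := by
    rw [qSigma]
    refine Finset.prod_eq_one fun p hp => ?_
    simp at hp
    exact absurd hp.2 (asymm hp.1)
  simp only [Equiv.Perm.one_apply] at h1 ⊢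
  rw [h1]
  simp

lemma Uop_mul {n : ℕ} (q : Fin n → Fin n → ℂ)
    (hq2 : ∀ i j, q j i = (q i j)⁻¹) (hq3 : ∀ i j, ‖q i j‖ = 1)
    {m : ℕ} (σ τ : Equiv.Perm (Fin m)) :
    Uop q m σ * Uop q m τ = Uop q m (σ * τ) := by
  ext f y
  have : (Uop q m σ * Uop q m τ) f y = Uop q m σ (Uop q m τ f) y := rfl
  rw [this, Uop_apply, Uop_apply, Uop_apply]
  have hc := qSigma_mul q hq2 hq3 (fun i => y (σ (τ i))) σ τ
  have hx : (fun i => (fun j => y (σ (τ j))) (τ⁻¹ i)) = fun i => y (σ i) := by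
    funext i; simp
  rw [hx] at hc
  have hmul : (fun i => y ((σ * τ) i)) = fun i => y (σ (τ i)) := by
    funext i; simp [Equiv.Perm.mul_apply]
  rw [hmul, hc]
  ring

/-- precomposition equivalence on words -/
def wordEquiv {n m : ℕ} (σ : Equiv.Perm (Fin m)) :
    (Fin m → Fin n) ≃ (Fin m → Fin n) where
  toFun y := fun i => y (σ i)
  invFun y := fun i => y (σ⁻¹ i)
  left_inv y := by funext i; simp
  right_inv y := by funext i; simp

lemma Uop_inner {n : ℕ} (q : Fin n → Fin n → ℂ) (hq3 : ∀ i j, ‖q i j‖ = 1)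
    {m : ℕ} (σ : Equiv.Perm (Fin m)) (f g : EuclideanSpace ℂ (Fin m → Fin n)) :
    inner ℂ (Uop q m σ f) (Uop q m σ g) = (inner ℂ f g : ℂ) := by
  rw [PiLp.inner_apply, PiLp.inner_apply]
  refine Fintype.sum_equiv (wordEquiv σ)
    (fun y => inner ℂ (Uop q m σ f y) (Uop q m σ g y)) (fun y => inner ℂ (f y) (g y)) ?_
  intro y
  dsimp only [wordEquiv, Equiv.coe_fn_mk]
  rw [Uop_apply, Uop_apply]
  simp only [RCLike.inner_apply']
  rw [map_mul, mul_mul_mul_comm]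
  have hQ : (starRingEnd ℂ) (qSigma q (fun i => y (σ i)) σ) * qSigma q (fun i => y (σ i)) σ = 1 := by
    rw [Complex.conj_mul']
    norm_cast
    rw [norm_qSigma q hq3]
    norm_num
  rw [hQ, one_mul]

lemma star_Uop {n : ℕ} (q : Fin n → Fin n → ℂ)
    (hq2 : ∀ i j, q j i = (q i j)⁻¹) (hq3 : ∀ i j, ‖q i j‖ = 1)
    {m : ℕ} (σ : Equiv.Perm (Fin m)) :
    star (Uop q m σ) = Uop q m σ⁻¹ := by
  have hisom : star (Uop q m σ) * Uop q m σ = 1 := by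
    refine ContinuousLinearMap.ext fun f => ?_
    refine ext_inner_right ℂ fun g => ?_
    rw [ContinuousLinearMap.mul_apply, ContinuousLinearMap.star_eq_adjoint,
      ContinuousLinearMap.adjoint_inner_left]
    rw [Uop_inner q hq3]
    rfl
  calc star (Uop q m σ) = star (Uop q m σ) * (Uop q m σ * Uop q m σ⁻¹) := by
        rw [Uop_mul q hq2 hq3, mul_inv_cancel, Uop_one, mul_one]
    _ = (star (Uop q m σ) * Uop q m σ) * Uop q m σ⁻¹ := by rw [mul_assoc]
    _ = Uop q m σ⁻¹ := by rw [hisom, one_mul]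

/-- The `q`-symmetrization operator `P_m = (1/m!) Σ_σ U^{m,q}_σ`. -/
noncomputable def Pm {n : ℕ} (q : Fin n → Fin n → ℂ) (m : ℕ) :
    EuclideanSpace ℂ (Fin m → Fin n) →L[ℂ] EuclideanSpace ℂ (Fin m → Fin n) :=
  ((m.factorial : ℂ))⁻¹ • ∑ σ : Equiv.Perm (Fin m), Uop q m σ

/-- `P_m = (1/m!) Σ_σ U^{m,q}_σ` is an orthogonal projection whose range is the fixed space
of all the `U^{m,q}_σ`. -/
theorem stmt7 {n : ℕ} (hn : 2 ≤ n) (q : Fin n → Fin n → ℂ)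
    (hq1 : ∀ i, q i i = 1) (hq2 : ∀ i j, q j i = (q i j)⁻¹) (hq3 : ∀ i j, ‖q i j‖ = 1)
    (m : ℕ) :
    star (Pm q m) = Pm q m ∧
    Pm q m * Pm q m = Pm q m ∧
    Set.range (Pm q m)
      = {u : EuclideanSpace ℂ (Fin m → Fin n) | ∀ σ : Equiv.Perm (Fin m), Uop q m σ u = u} := by
  have hfact : ((m.factorial : ℂ)) ≠ 0 :=
    Nat.cast_ne_zero.2 (Nat.factorial_pos m).ne'
  have hUP : ∀ τ : Equiv.Perm (Fin m), Uop q m τ * Pm q m = Pm q m := by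
    intro τ
    rw [Pm, mul_smul_comm, Finset.mul_sum]
    congr 1
    refine Fintype.sum_equiv (Equiv.mulLeft τ) _ _ fun σ => ?_
    rw [Uop_mul q hq2 hq3]
    rfl
  have hmul : Pm q m * Pm q m = Pm q m := by
    nth_rewrite 1 [Pm]
    rw [smul_mul_assoc, Finset.sum_mul]
    have h1 : ∀ σ ∈ Finset.univ, Uop q m σ * Pm q m = Pm q m := fun σ _ => hUP σ
    rw [Finset.sum_congr rfl h1, Finset.sum_const, Finset.card_univ, Fintype.card_perm,
      Fintype.card_fin, ← Nat.cast_smul_eq_nsmul ℂ, smul_smul,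
      inv_mul_cancel₀ hfact, one_smul]
  have hstar : star (Pm q m) = Pm q m := by
    rw [Pm, star_smul, star_sum Finset.univ (fun σ : Equiv.Perm (Fin m) => Uop q m σ)]
    simp only [star_Uop q hq2 hq3]
    have h2 : (∑ σ : Equiv.Perm (Fin m), Uop q m σ⁻¹) = ∑ σ : Equiv.Perm (Fin m), Uop q m σ :=
      Fintype.sum_equiv (Equiv.inv (Equiv.Perm (Fin m))) _ _ fun σ => rfl
    rw [h2]
    congr 1
    simp [star_inv₀]
  refine ⟨hstar, hmul, ?_⟩
  ext u
  constructor
  · rintro ⟨v, rfl⟩ σ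
    have := congrFun (congrArg (fun T => T v) (hUP σ)) 
    calc Uop q m σ (Pm q m v) = (Uop q m σ * Pm q m) v := rfl
      _ = Pm q m v := by rw [hUP σ]
  · intro hu
    refine ⟨u, ?_⟩
    rw [Pm, ContinuousLinearMap.smul_apply, ContinuousLinearMap.sum_apply]
    have h3 : ∀ σ ∈ Finset.univ, Uop q m σ u = u := fun σ _ => hu σ
    rw [Finset.sum_congr rfl h3, Finset.sum_const, Finset.card_univ, Fintype.card_perm,
      Fintype.card_fin, ← Nat.cast_smul_eq_nsmul ℂ, smul_smul,
      inv_mul_cancel₀ hfact, one_smul]
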